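/- For every non-trivial rule word w, the map T_w has no periodic points: there is no configuration (C,p,d) and no T > 0 with T_w^T(C,p,d) = (C,p,d). -/

import Mathlib

/-- Cells of the grid `ℤ²`. -/
abbrev Cell : Type := ℤ × ℤ

/-- The two letters of a rule word. -/
inductive Letter : Type
  | L | R
deriving DecidableEq

/-- The four unit directions of `ℤ²` (the state set `Q`). -/
inductive Dir : Type
  | E | N | W | S
deriving DecidableEq

/-- Rotation by 90° counterclockwise. -/
def Dir.left : Dir → Dir
  | .E => .N | .N => .W | .W => .S | .S => .E

/-- Rotation by 90° clockwise. -/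
def Dir.right : Dir → Dir
  | .E => .S | .S => .W | .W => .N | .N => .E

/-- The unit vector of a direction. -/
def Dir.vec : Dir → Cell
  | .E => (1, 0) | .N => (0, 1) | .W => (-1, 0) | .S => (0, -1)

/-- Configurations: a picture `ℤ² → ℤ/nℤ`, a position and a direction. -/
abbrev Config (n : ℕ) : Type := (Cell → ZMod n) × Cell × Dir

/-- One step of the generalised ant with rule word `w ∈ {L,R}⁺`:
the symbol under the ant is increased by `1 (mod |w|)`, the ant turns left or
right according to the letter `w_{C(p)}`, and moves one step in its new direction. -/
def antStepW (w : List Letter) (cfg : Config w.length) : Config w.length :=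
  let C := cfg.1
  let p := cfg.2.1
  let d' := if w.getD (C p).val Letter.L = Letter.L then cfg.2.2.left else cfg.2.2.right
  (Function.update C p (C p + 1), p + d'.vec, d')

namespace AntNP

/-- Whether a direction is horizontal. -/
def isH : Dir → Bool
  | Dir.E => true
  | Dir.W => true
  | Dir.N => false
  | Dir.S => false

lemma isH_left (d : Dir) : isH d.left = !isH d := by cases d <;> rfl

lemma isH_right (d : Dir) : isH d.right = !isH d := by cases d <;> rfl

lemma vec_parity (d : Dir) : ((d.vec.1 + d.vec.2 : ℤ) : ZMod 2) = 1 := by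
  cases d <;> decide

section

variable (w : List Letter) (cfg : Config w.length)

/-- The orbit of a configuration. -/
def orb (t : ℕ) : Config w.length := (antStepW w)^[t] cfg

/-- Position along the orbit. -/
def Pos (t : ℕ) : Cell := (orb w cfg t).2.1

/-- Direction along the orbit. -/
def Di (t : ℕ) : Dir := (orb w cfg t).2.2

/-- Colouring along the orbit. -/
def Co (t : ℕ) : Cell → ZMod w.length := (orb w cfg t).1

lemma orb_succ (t : ℕ) : orb w cfg (t + 1) = antStepW w (orb w cfg t) :=
  Function.iterate_succ_apply' _ _ _

lemma step_Di (t : ℕ) :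
    Di w cfg (t + 1) =
      if w.getD ((Co w cfg t) (Pos w cfg t)).val Letter.L = Letter.L
        then (Di w cfg t).left else (Di w cfg t).right := by
  show (orb w cfg (t + 1)).2.2 = _
  rw [orb_succ]; rfl

lemma step_Pos (t : ℕ) : Pos w cfg (t + 1) = Pos w cfg t + (Di w cfg (t + 1)).vec := by
  show (orb w cfg (t + 1)).2.1 = (orb w cfg t).2.1 + ((orb w cfg (t + 1)).2.2).vec
  rw [orb_succ]; rfl

lemma step_Co (t : ℕ) :
    Co w cfg (t + 1) =
      Function.update (Co w cfg t) (Pos w cfg t) (Co w cfg t (Pos w cfg t) + 1) := by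
  show (orb w cfg (t + 1)).1 = _
  rw [orb_succ]; rfl

lemma isH_Di_succ (t : ℕ) : isH (Di w cfg (t + 1)) = !isH (Di w cfg t) := by
  rw [step_Di]; split
  · exact isH_left _
  · exact isH_right _

lemma isH_Di (t : ℕ) :
    isH (Di w cfg t) = if t % 2 = 0 then isH (Di w cfg 0) else !isH (Di w cfg 0) := by
  induction t with
  | zero => simp
  | succ t ih =>
    rw [isH_Di_succ, ih]
    rcases Nat.mod_two_eq_zero_or_one t with h | h
    · have h' : (t + 1) % 2 = 1 := by omega
      simp [h, h']
    · have h' : (t + 1) % 2 = 0 := by omega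
      simp [h, h']

/-- Position parity. -/
def phi (t : ℕ) : ZMod 2 := (((Pos w cfg t).1 + (Pos w cfg t).2 : ℤ) : ZMod 2)

lemma phi_succ (t : ℕ) : phi w cfg (t + 1) = phi w cfg t + 1 := by
  unfold phi
  rw [step_Pos]
  have h : ((Pos w cfg t + (Di w cfg (t+1)).vec).1 + (Pos w cfg t + (Di w cfg (t+1)).vec).2 : ℤ)
      = ((Pos w cfg t).1 + (Pos w cfg t).2) + ((Di w cfg (t+1)).vec.1 + (Di w cfg (t+1)).vec.2) := by
    simp [Prod.fst_add, Prod.snd_add]; ring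
  rw [h, Int.cast_add, vec_parity]

lemma phi_eq (t : ℕ) : phi w cfg t = phi w cfg 0 + (t : ZMod 2) := by
  induction t with
  | zero => simp
  | succ t ih => rw [phi_succ, ih]; push_cast; ring

lemma mod_two_eq_of_Pos_eq {s t : ℕ} (h : Pos w cfg s = Pos w cfg t) : s % 2 = t % 2 := by
  have hphi : phi w cfg s = phi w cfg t := by unfold phi; rw [h]
  rw [phi_eq w cfg s, phi_eq w cfg t] at hphi
  have h2 : (s : ZMod 2) = (t : ZMod 2) := add_left_cancel hphi
  exact (ZMod.natCast_eq_natCast_iff _ _ _).mp h2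

/-- Number of visits to `q` before time `t`. -/
def cnt (q : Cell) (t : ℕ) : ℕ := ((Finset.range t).filter (fun s => Pos w cfg s = q)).card

lemma cnt_succ (q : Cell) (t : ℕ) :
    cnt w cfg q (t + 1) = cnt w cfg q t + if Pos w cfg t = q then 1 else 0 := by
  unfold cnt
  rw [Finset.range_add_one, Finset.filter_insert]
  split
  · rw [Finset.card_insert_of_notMem (by simp)]
  · simp

lemma cnt_mono (q : Cell) {s t : ℕ} (h : s ≤ t) : cnt w cfg q s ≤ cnt w cfg q t :=
  Finset.card_le_card (Finset.filter_subset_filter _ (Finset.range_subset_range.mpr h))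

lemma cnt_le (q : Cell) (t : ℕ) : cnt w cfg q t ≤ t := by
  calc cnt w cfg q t ≤ (Finset.range t).card := Finset.card_filter_le _ _
  _ = t := Finset.card_range t

lemma Co_eq (t : ℕ) (q : Cell) :
    Co w cfg t q = Co w cfg 0 q + (cnt w cfg q t : ZMod w.length) := by
  induction t with
  | zero => simp [cnt]
  | succ t ih =>
    rw [step_Co, cnt_succ]
    by_cases h : Pos w cfg t = q
    · subst h
      rw [Function.update_self, ih]
      simp
      ring
    · rw [Function.update_of_ne (Ne.symm h), ih]
      simp [h]

lemma orb_period (T : ℕ) (hper : (antStepW w)^[T] cfg = cfg) (t : ℕ) :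
    orb w cfg (t + T) = orb w cfg t := by
  unfold orb; rw [Function.iterate_add_apply, hper]

lemma orb_period_mul (T : ℕ) (hper : (antStepW w)^[T] cfg = cfg) (k t : ℕ) :
    orb w cfg (t + k * T) = orb w cfg t := by
  induction k with
  | zero => simp
  | succ k ih => rw [Nat.succ_mul, ← Nat.add_assoc, orb_period w cfg T hper, ih]

end

end AntNP

/-- For every non-trivial rule word `w`, the map `T_w` has no
periodic points. -/
theorem ant_no_periodic_points (w : List Letter)
    (hL : Letter.L ∈ w) (hR : Letter.R ∈ w) :
    ¬ ∃ (cfg : Config w.length) (T : ℕ), 0 < T ∧ (antStepW w)^[T] cfg = cfg := by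
  rintro ⟨cfg, T, hT, hper⟩
  have hn : 0 < w.length := List.length_pos_iff.mpr (List.ne_nil_of_mem hL)
  haveI : NeZero w.length := ⟨hn.ne'⟩
  -- the set of visited cells
  set S : Finset Cell := (Finset.range T).image (fun t => AntNP.Pos w cfg t) with hSdef
  have hS : S.Nonempty :=
    ⟨AntNP.Pos w cfg 0, Finset.mem_image.mpr ⟨0, Finset.mem_range.mpr hT, rfl⟩⟩
  set Y : ℤ := (S.image Prod.snd).max' (hS.image _) with hYdef
  have hS2 : (S.filter (fun q => q.2 = Y)).Nonempty := by
    have hY : Y ∈ S.image Prod.snd := Finset.max'_mem _ _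
    obtain ⟨q, hq, hq2⟩ := Finset.mem_image.mp hY
    exact ⟨q, Finset.mem_filter.mpr ⟨hq, hq2⟩⟩
  set X : ℤ := ((S.filter (fun q => q.2 = Y)).image Prod.fst).max' (hS2.image _) with hXdef
  set M : Cell := (X, Y) with hM
  have hMS : M ∈ S := by
    have hX : X ∈ (S.filter (fun q => q.2 = Y)).image Prod.fst := Finset.max'_mem _ _
    obtain ⟨q, hq, hq1⟩ := Finset.mem_image.mp hX
    obtain ⟨hqS, hqY⟩ := Finset.mem_filter.mp hq
    have hqM : q = M := by
      rw [hM, Prod.ext_iff]; exact ⟨hq1, hqY⟩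
    rwa [hqM] at hqS
  -- every position is a visited cell
  have hPmem : ∀ t, AntNP.Pos w cfg t ∈ S := by
    intro t
    have h1 : AntNP.Pos w cfg t = AntNP.Pos w cfg (t % T) := by
      conv_lhs => rw [show t = t % T + (t / T) * T from (Nat.mod_add_div' t T).symm]
      show (AntNP.orb w cfg (t % T + (t / T) * T)).2.1 = _
      rw [AntNP.orb_period_mul w cfg T hper]
      rfl
    rw [h1, hSdef]
    exact Finset.mem_image.mpr ⟨t % T, Finset.mem_range.mpr (Nat.mod_lt t hT), rfl⟩
  have hYb : ∀ t, (AntNP.Pos w cfg t).2 ≤ Y := by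
    intro t
    exact Finset.le_max' _ _ (Finset.mem_image.mpr ⟨_, hPmem t, rfl⟩)
  have hXb : ∀ t, (AntNP.Pos w cfg t).2 = Y → (AntNP.Pos w cfg t).1 ≤ X := by
    intro t ht
    exact Finset.le_max' _ _
      (Finset.mem_image.mpr ⟨_, Finset.mem_filter.mpr ⟨hPmem t, ht⟩, rfl⟩)
  -- M is visited at some time t₀ < T
  obtain ⟨t₀, ht₀T, ht₀⟩ := Finset.mem_image.mp hMS
  have ht₀T' : t₀ < T := Finset.mem_range.mp ht₀T
  -- counting visits to M
  have hPvisit : ∀ k, AntNP.Pos w cfg (t₀ + k * T) = M := by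
    intro k
    show (AntNP.orb w cfg (t₀ + k * T)).2.1 = M
    rw [AntNP.orb_period_mul w cfg T hper]
    exact ht₀
  have f0 : AntNP.cnt w cfg M 0 = 0 := by simp [AntNP.cnt]
  have f_strict : ∀ t, AntNP.cnt w cfg M t < AntNP.cnt w cfg M (t + 2 * T) := by
    intro t
    set s : ℕ := t₀ + (t / T + 1) * T with hs
    have hsM : AntNP.Pos w cfg s = M := hPvisit _
    have h1' : t < t₀ + (t / T + 1) * T := by
      calc t = T * (t / T) + t % T := (Nat.div_add_mod t T).symm
      _ < T * (t / T) + T := Nat.add_lt_add_left (Nat.mod_lt t hT) _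
      _ = (t / T + 1) * T := by ring
      _ ≤ t₀ + (t / T + 1) * T := Nat.le_add_left _ _
    have h1 : t ≤ s := by rw [hs]; exact h1'.le
    have h3 : s + 1 ≤ t + 2 * T := by
      have h4 : t / T * T ≤ t := Nat.div_mul_le_self t T
      have h5 : t₀ + 1 ≤ T := ht₀T'
      calc s + 1 = t₀ + 1 + (t / T * T + T) := by rw [hs]; ring
      _ ≤ T + (t + T) := add_le_add h5 (Nat.add_le_add_right h4 T)
      _ = t + 2 * T := by ring
    calc AntNP.cnt w cfg M t ≤ AntNP.cnt w cfg M s := AntNP.cnt_mono w cfg M h1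
    _ < AntNP.cnt w cfg M (s + 1) := by
        rw [AntNP.cnt_succ, if_pos hsM]; omega
    _ ≤ AntNP.cnt w cfg M (t + 2 * T) := AntNP.cnt_mono w cfg M h3
  have f_unb : ∀ j, ∃ t, j ≤ AntNP.cnt w cfg M t := by
    intro j
    induction j with
    | zero => exact ⟨0, Nat.zero_le _⟩
    | succ j ih =>
      obtain ⟨t, ht⟩ := ih
      exact ⟨t + 2 * T, by have := f_strict t; omega⟩
  -- extraction of the j-th visit
  have f_hit : ∀ j, 1 ≤ j → ∃ u, 1 ≤ u ∧ AntNP.Pos w cfg u = M ∧ AntNP.cnt w cfg M u = j := by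
    intro j hj
    have hex : ∃ t, j + 1 ≤ AntNP.cnt w cfg M t := f_unb (j + 1)
    have ht0 : Nat.find hex ≠ 0 := by
      intro h
      have := Nat.find_spec hex
      rw [h, f0] at this
      omega
    obtain ⟨u, hu_eq⟩ := Nat.exists_eq_succ_of_ne_zero ht0
    have htf : j + 1 ≤ AntNP.cnt w cfg M (u + 1) := by
      have := Nat.find_spec hex
      rwa [hu_eq] at this
    have hu : ¬ (j + 1 ≤ AntNP.cnt w cfg M u) := Nat.find_min hex (by omega)
    have hstep := AntNP.cnt_succ w cfg M u
    have hPu : AntNP.Pos w cfg u = M := by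
      by_contra h
      rw [if_neg h] at hstep
      omega
    have hfu : AntNP.cnt w cfg M u = j := by
      rw [if_pos hPu] at hstep
      omega
    have hu1 : 1 ≤ u := by
      have := AntNP.cnt_le w cfg M u
      omega
    exact ⟨u, hu1, hPu, hfu⟩
  -- visits with a prescribed colour
  have key : ∀ i : ℕ, i < w.length →
      ∃ u, 1 ≤ u ∧ AntNP.Pos w cfg u = M ∧ (AntNP.Co w cfg u M).val = i := by
    intro i hi
    set x : ZMod w.length := (i : ZMod w.length) - AntNP.Co w cfg 0 M with hx
    obtain ⟨u, hu1, hPu, hfu⟩ := f_hit (w.length + x.val) (by omega)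
    refine ⟨u, hu1, hPu, ?_⟩
    have hco := AntNP.Co_eq w cfg u M
    rw [hfu] at hco
    have hcast : ((w.length + x.val : ℕ) : ZMod w.length) = x := by
      push_cast
      rw [ZMod.natCast_self, ZMod.natCast_rightInverse x]
      ring
    have hCo : AntNP.Co w cfg u M = (i : ZMod w.length) := by
      rw [hco, hcast, hx]; ring
    rw [hCo, ZMod.val_cast_of_lt hi]
  -- entry direction constraints at M
  have entry : ∀ u, 1 ≤ u → AntNP.Pos w cfg u = M →
      AntNP.Di w cfg u ≠ Dir.W ∧ AntNP.Di w cfg u ≠ Dir.S := by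
    intro u hu hP
    obtain ⟨s, rfl⟩ : ∃ s, u = s + 1 := ⟨u - 1, by omega⟩
    have hstep := AntNP.step_Pos w cfg s
    rw [hP] at hstep
    constructor
    · intro hW
      rw [hW] at hstep
      have h2 : (AntNP.Pos w cfg s).2 = Y := by
        have := congrArg Prod.snd hstep
        simp [hM, Dir.vec, Prod.snd_add] at this
        omega
      have h1 : (AntNP.Pos w cfg s).1 = X + 1 := by
        have := congrArg Prod.fst hstep
        simp [hM, Dir.vec, Prod.fst_add] at this
        omega
      have := hXb s h2
      omega
    · intro hSo
      rw [hSo] at hstep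
      have h2 : (AntNP.Pos w cfg s).2 = Y + 1 := by
        have := congrArg Prod.snd hstep
        simp [hM, Dir.vec, Prod.snd_add] at this
        omega
      have := hYb s
      omega
  -- exit direction constraints at M
  have exit : ∀ u, AntNP.Pos w cfg u = M →
      AntNP.Di w cfg (u + 1) ≠ Dir.N ∧ AntNP.Di w cfg (u + 1) ≠ Dir.E := by
    intro u hP
    have hstep := AntNP.step_Pos w cfg u
    rw [hP] at hstep
    constructor
    · intro hN
      rw [hN] at hstep
      have h2 : (AntNP.Pos w cfg (u + 1)).2 = Y + 1 := by
        rw [hstep]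
        simp [hM, Dir.vec, Prod.snd_add]
      have := hYb (u + 1)
      omega
    · intro hE
      rw [hE] at hstep
      have h2 : (AntNP.Pos w cfg (u + 1)).2 = Y := by
        rw [hstep]
        simp [hM, Dir.vec, Prod.snd_add]
      have h1 : (AntNP.Pos w cfg (u + 1)).1 = X + 1 := by
        rw [hstep]
        simp [hM, Dir.vec, Prod.fst_add]
      have := hXb (u + 1) h2
      omega
  -- an L-visit and an R-visit to M
  obtain ⟨iL, hiL, hgL⟩ := List.mem_iff_getElem.mp hL
  obtain ⟨iR, hiR, hgR⟩ := List.mem_iff_getElem.mp hR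
  obtain ⟨uL, huL1, hPuL, hCuL⟩ := key iL hiL
  obtain ⟨uR, huR1, hPuR, hCuR⟩ := key iR hiR
  have hDL : AntNP.Di w cfg (uL + 1) = (AntNP.Di w cfg uL).left := by
    rw [AntNP.step_Di, hPuL, hCuL, List.getD_eq_getElem _ _ hiL, hgL, if_pos rfl]
  have hDR : AntNP.Di w cfg (uR + 1) = (AntNP.Di w cfg uR).right := by
    rw [AntNP.step_Di, hPuR, hCuR, List.getD_eq_getElem _ _ hiR, hgR,
      if_neg (by decide : Letter.R ≠ Letter.L)]
  -- forced entry directions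
  have hDLN : AntNP.Di w cfg uL = Dir.N := by
    obtain ⟨hW, hSo⟩ := entry uL huL1 hPuL
    obtain ⟨hN, hE⟩ := exit uL hPuL
    rw [hDL] at hN hE
    cases h : AntNP.Di w cfg uL with
    | E => rw [h] at hN; exact absurd rfl hN
    | N => rfl
    | W => exact absurd h hW
    | S => exact absurd h hSo
  have hDRE : AntNP.Di w cfg uR = Dir.E := by
    obtain ⟨hW, hSo⟩ := entry uR huR1 hPuR
    obtain ⟨hN, hE⟩ := exit uR hPuR
    rw [hDR] at hN hE
    cases h : AntNP.Di w cfg uR with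
    | E => rfl
    | N => rw [h] at hE; exact absurd rfl hE
    | W => exact absurd h hW
    | S => exact absurd h hSo
  -- parity contradiction
  have hpar : uL % 2 = uR % 2 :=
    AntNP.mod_two_eq_of_Pos_eq w cfg (by rw [hPuL, hPuR])
  have h1 : AntNP.isH (AntNP.Di w cfg uL) = AntNP.isH (AntNP.Di w cfg uR) := by
    rw [AntNP.isH_Di w cfg uL, AntNP.isH_Di w cfg uR, hpar]
  rw [hDLN, hDRE] at h1
  exact absurd h1 (by decide)
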